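/- Fix integers M, n ≥ 1 and assume max_j ‖f_j‖ ≤ 1. For any function η and any constant ν > 0, min over θ ∈ ℝ^M of { ‖f_θ - η‖² + ν²·(M(θ)/n)·log(1 + eM/(M(θ)∨1)) } is at most min over θ ∈ ℝ^M of { ‖f_θ - η‖² + c̃·φ̄(θ) }, where c̃ = 3 + 1/e, φ̄(0) = 0, and for θ ≠ 0: φ̄(θ) = min( ν|θ|₁/√n · √(log(1 + eMν/(|θ|₁√n))), |θ|₁² ) if ⟨f_θ, η⟩ ≤ ‖f_θ‖², and φ̄(θ) = ν|θ|₁/√n · √(log(1 + eMν/(|θ|₁√n))) + ν²log(1+eM)/(c̃ n) otherwise. -/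

import Mathlib

open Finset


lemma exp_prod {m M : ℕ} (c : Fin m → Fin M → ℝ) :
    ∑ J : Fin m → Fin M, ∏ k, c k (J k) = ∏ k, ∑ j, c k j := by
  rw [Finset.prod_univ_sum]
  rw [Fintype.piFinset_univ]

lemma exp_one {m M : ℕ} (p : Fin M → ℝ) (hp1 : ∑ j, p j = 1) :
    ∑ J : Fin m → Fin M, ∏ k, p (J k) = 1 := by
  rw [exp_prod (fun _ j => p j)]
  simp [hp1]

lemma exp_single {m M : ℕ} (p a : Fin M → ℝ) (hp1 : ∑ j, p j = 1) (k0 : Fin m) :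
    ∑ J : Fin m → Fin M, (∏ k, p (J k)) * a (J k0) = ∑ j, p j * a j := by
  have h : ∀ J : Fin m → Fin M, (∏ k, p (J k)) * a (J k0)
      = ∏ k, (p (J k) * (if k = k0 then a (J k) else 1)) := by
    intro J
    rw [Finset.prod_mul_distrib, Finset.prod_ite_eq' univ k0 (fun k => a (J k))]
    simp
  simp_rw [h]
  rw [exp_prod (fun k j => p j * (if k = k0 then a j else 1))]
  have h2 : ∀ k : Fin m, (∑ j, p j * (if k = k0 then a j else 1))
      = if k = k0 then (∑ j, p j * a j) else 1 := by
    intro k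
    by_cases hk : k = k0 <;> simp [hk, hp1]
  simp_rw [h2]
  rw [Finset.prod_ite_eq' univ k0 (fun _ => ∑ j, p j * a j)]
  simp

lemma exp_pair {m M : ℕ} (p a b : Fin M → ℝ) (hp1 : ∑ j, p j = 1) (k0 l0 : Fin m)
    (hkl : k0 ≠ l0) :
    ∑ J : Fin m → Fin M, (∏ k, p (J k)) * (a (J k0) * b (J l0))
      = (∑ j, p j * a j) * (∑ j, p j * b j) := by
  have h : ∀ J : Fin m → Fin M, (∏ k, p (J k)) * (a (J k0) * b (J l0))
      = ∏ k, (p (J k) * ((if k = k0 then a (J k) else 1) * (if k = l0 then b (J k) else 1))) := by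
    intro J
    rw [Finset.prod_mul_distrib, Finset.prod_mul_distrib,
      Finset.prod_ite_eq' univ k0 (fun k => a (J k)),
      Finset.prod_ite_eq' univ l0 (fun k => b (J k))]
    simp [mul_assoc]
  simp_rw [h]
  rw [exp_prod (fun k j => p j * ((if k = k0 then a j else 1) * (if k = l0 then b j else 1)))]
  have h2 : ∀ k : Fin m, (∑ j, p j * ((if k = k0 then a j else 1) * (if k = l0 then b j else 1)))
      = (if k = k0 then (∑ j, p j * a j) else 1) * (if k = l0 then (∑ j, p j * b j) else 1) := by
    intro k
    by_cases hk : k = k0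
    · subst hk
      simp [hkl, hp1]
    · by_cases hl : k = l0
      · subst hl
        simp [Ne.symm hkl, hp1]
      · simp [hk, hl, hp1]
  simp_rw [h2]
  rw [Finset.prod_mul_distrib, Finset.prod_ite_eq' univ k0 (fun _ => ∑ j, p j * a j),
    Finset.prod_ite_eq' univ l0 (fun _ => ∑ j, p j * b j)]
  simp


lemma maurey_scalar {m M : ℕ} (hm : 1 ≤ m) (p a : Fin M → ℝ) (hp1 : ∑ j, p j = 1) (y : ℝ) :
    ∑ J : Fin m → Fin M, (∏ k, p (J k)) * ((∑ k, a (J k)) / m - y) ^ 2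
      = ((∑ j, p j * a j) - y) ^ 2
        + (1 / m) * ((∑ j, p j * a j ^ 2) - (∑ j, p j * a j) ^ 2) := by
  have hm0 : (m : ℝ) ≠ 0 := by positivity
  set A1 : ℝ := ∑ j, p j * a j with hA1
  set A2 : ℝ := ∑ j, p j * a j ^ 2 with hA2
  have key : ∀ J : Fin m → Fin M,
      (∏ k, p (J k)) * ((∑ k, a (J k)) / m - y) ^ 2
      = (1 / m^2) * (∑ k, ∑ l, (∏ k', p (J k')) * (a (J k) * a (J l)))
        - (2 * y / m) * (∑ k, (∏ k', p (J k')) * a (J k))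
        + y ^ 2 * (∏ k', p (J k')) := by
    intro J
    have : ((∑ k, a (J k)) / m - y) ^ 2
        = (1 / m^2) * ((∑ k, a (J k)) * (∑ l, a (J l)))
          - (2 * y / m) * (∑ k, a (J k)) + y ^ 2 := by
      field_simp
      ring
    rw [this]
    rw [Finset.sum_mul_sum]
    simp only [Finset.mul_sum]
    ring_nf
    simp only [Finset.mul_sum]
    ring_nf
  simp_rw [key]
  rw [Finset.sum_add_distrib, Finset.sum_sub_distrib, ← Finset.mul_sum, ← Finset.mul_sum,
    ← Finset.mul_sum]
  have hW : ∑ J : Fin m → Fin M, ∏ k', p (J k') = 1 := exp_one p hp1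
  have P2 : (∑ J : Fin m → Fin M, ∑ k, (∏ k', p (J k')) * a (J k)) = m * A1 := by
    rw [Finset.sum_comm]
    rw [Finset.sum_congr rfl fun k _ => exp_single p a hp1 k]
    simp [mul_comm]
    exact Or.inl hA1.symm
  have P1 : (∑ J : Fin m → Fin M, ∑ k, ∑ l, (∏ k', p (J k')) * (a (J k) * a (J l)))
      = m * A2 + (m ^ 2 - m) * A1 ^ 2 := by
    rw [Finset.sum_comm]
    have hin : ∀ k : Fin m, (∑ J : Fin m → Fin M, ∑ l, (∏ k', p (J k')) * (a (J k) * a (J l)))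
        = A2 + (m - 1) * A1 ^ 2 := by
      intro k
      rw [Finset.sum_comm]
      have hkl : ∀ l : Fin m, (∑ J : Fin m → Fin M, (∏ k', p (J k')) * (a (J k) * a (J l)))
          = if k = l then A2 else A1 ^ 2 := by
        intro l
        by_cases hkl : k = l
        · subst hkl
          rw [if_pos rfl]
          have := exp_single p (fun j => a j * a j) hp1 k
          rw [this]
          rw [hA2]
          exact Finset.sum_congr rfl fun j _ => by ring
        · rw [if_neg hkl, exp_pair p a a hp1 k l hkl]
          rw [hA1]; ring
      rw [Finset.sum_congr rfl fun l _ => hkl l]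
      have hsplit : ∀ l : Fin m, (if k = l then A2 else A1 ^ 2)
          = A1 ^ 2 + (if k = l then A2 - A1 ^ 2 else 0) := by
        intro l; split <;> ring
      rw [Finset.sum_congr rfl fun l _ => hsplit l, Finset.sum_add_distrib,
        Finset.sum_const, Finset.sum_ite_eq univ k (fun _ => A2 - A1 ^ 2)]
      simp
      ring
    rw [Finset.sum_congr rfl fun k _ => hin k]
    rw [Finset.sum_const]
    simp
    ring
  rw [hW, P1, P2]
  field_simp
  ring


lemma maurey_exists {n m M : ℕ} (hm : 1 ≤ m) (hM : 1 ≤ M)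
    (p : Fin M → ℝ) (hp : ∀ j, 0 ≤ p j) (hp1 : ∑ j, p j = 1)
    (V : Fin M → Fin n → ℝ) (y : Fin n → ℝ) (Q : ℝ)
    (hQ : ∀ j, (1 / n : ℝ) * ∑ i, V j i ^ 2 ≤ Q) :
    ∃ J : Fin m → Fin M,
      (1 / n : ℝ) * ∑ i, ((∑ k, V (J k) i) / m - y i) ^ 2
        ≤ (1 / n : ℝ) * ∑ i, ((∑ j, p j * V j i) - y i) ^ 2 + Q / m := by
  have hm0 : (0:ℝ) < m := by positivity
  set W : (Fin m → Fin M) → ℝ := fun J => ∏ k, p (J k) with hWdef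
  have hWnn : ∀ J, 0 ≤ W J := fun J => Finset.prod_nonneg fun k _ => hp (J k)
  have hW1 : ∑ J : Fin m → Fin M, W J = 1 := exp_one p hp1
  set B : ℝ := (1 / n : ℝ) * ∑ i, ((∑ j, p j * V j i) - y i) ^ 2 + Q / m with hB
  set val : (Fin m → Fin M) → ℝ :=
    fun J => (1 / n : ℝ) * ∑ i, ((∑ k, V (J k) i) / m - y i) ^ 2 with hval
  have hE : ∑ J : Fin m → Fin M, W J * val J ≤ B := by
    have swap : ∑ J : Fin m → Fin M, W J * val J
        = (1 / n : ℝ) * ∑ i, ∑ J : Fin m → Fin M, W J * ((∑ k, V (J k) i) / m - y i) ^ 2 := by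
      simp only [hval, Finset.mul_sum]
      rw [Finset.sum_comm]
      exact Finset.sum_congr rfl fun i _ => Finset.sum_congr rfl fun J _ => by ring
    rw [swap]
    have hper : ∀ i, ∑ J : Fin m → Fin M, W J * ((∑ k, V (J k) i) / m - y i) ^ 2
        = ((∑ j, p j * V j i) - y i) ^ 2
          + (1 / m) * ((∑ j, p j * V j i ^ 2) - (∑ j, p j * V j i) ^ 2) :=
      fun i => maurey_scalar hm p (fun j => V j i) hp1 (y i)
    rw [Finset.sum_congr rfl fun i _ => hper i]
    rw [Finset.sum_add_distrib, mul_add, hB]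
    apply add_le_add le_rfl
    have h1 : ∀ x : Fin n, (1 / m : ℝ) * ((∑ j, p j * V j x ^ 2) - (∑ j, p j * V j x) ^ 2)
        ≤ (1 / m) * ∑ j, p j * V j x ^ 2 := by
      intro x
      apply mul_le_mul_of_nonneg_left _ (by positivity)
      have := sq_nonneg (∑ j, p j * V j x)
      linarith
    calc (1 / n : ℝ) * ∑ x, (1 / m : ℝ) * ((∑ j, p j * V j x ^ 2) - (∑ j, p j * V j x) ^ 2)
        ≤ (1 / n : ℝ) * ∑ x, (1 / m : ℝ) * ∑ j, p j * V j x ^ 2 :=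
          mul_le_mul_of_nonneg_left (Finset.sum_le_sum fun x _ => h1 x) (by positivity)
      _ = ∑ j, p j * ((1 / n : ℝ) * ∑ x, V j x ^ 2) * (1 / m) := by
          simp only [Finset.mul_sum, Finset.sum_mul]
          rw [Finset.sum_comm]
          exact Finset.sum_congr rfl fun j _ => Finset.sum_congr rfl fun x _ => by ring
      _ ≤ ∑ j, p j * Q * (1 / m) :=
          Finset.sum_le_sum fun j _ =>
            mul_le_mul_of_nonneg_right (mul_le_mul_of_nonneg_left (hQ j) (hp j)) (by positivity)
      _ = Q / m := by
          rw [← Finset.sum_mul, ← Finset.sum_mul, hp1]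
          ring
  by_contra hcon
  push_neg at hcon
  have hJ0 : ∃ J0 : Fin m → Fin M, 0 < W J0 := by
    by_contra hall
    push_neg at hall
    have : ∑ J : Fin m → Fin M, W J ≤ 0 := Finset.sum_nonpos fun J _ => hall J
    rw [hW1] at this
    linarith
  obtain ⟨J0, hJ0⟩ := hJ0
  have hBlt : B < ∑ J : Fin m → Fin M, W J * val J := by
    have : ∑ J : Fin m → Fin M, W J * B < ∑ J : Fin m → Fin M, W J * val J := by
      apply Finset.sum_lt_sum
      · exact fun J _ => mul_le_mul_of_nonneg_left (hcon J).le (hWnn J)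
      · exact ⟨J0, Finset.mem_univ _, mul_lt_mul_of_pos_left (hcon J0) hJ0⟩
    rwa [← Finset.sum_mul, hW1, one_mul] at this
  linarith

lemma philog_mono {c x y : ℝ} (hc : 0 ≤ c) (hx : 0 < x) (hxy : x ≤ y) :
    x * Real.log (1 + c / x) ≤ y * Real.log (1 + c / y) := by
  have hy : 0 < y := hx.trans_le hxy
  have hber : 1 + (y / x) * (c / y) ≤ (1 + c / y) ^ (y / x) :=
    one_add_mul_self_le_rpow_one_add (by nlinarith [div_nonneg hc hy.le]) ((one_le_div hx).mpr hxy)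
  have hxy' : (y / x) * (c / y) = c / x := by
    field_simp
  rw [hxy'] at hber
  have hlog : Real.log (1 + c / x) ≤ (y / x) * Real.log (1 + c / y) := by
    calc Real.log (1 + c / x) ≤ Real.log ((1 + c / y) ^ (y / x)) :=
          Real.log_le_log (by positivity) hber
      _ = (y / x) * Real.log (1 + c / y) := Real.log_rpow (by positivity) _
  calc x * Real.log (1 + c / x) ≤ x * ((y / x) * Real.log (1 + c / y)) :=
        mul_le_mul_of_nonneg_left hlog hx.le
    _ = y * Real.log (1 + c / y) := by field_simp

lemma core_bound {c r : ℝ} (hc : 1 ≤ c) (hr : 0 < r)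
    (h : Real.sqrt (Real.log (1 + c / r)) < r) :
    ∃ m : ℕ, 1 ≤ m ∧ r ^ 2 / m + m * Real.log (1 + c / m)
      ≤ (3 + 1 / Real.exp 1) * (r * Real.sqrt (Real.log (1 + c / r))) := by
  have hcr : 0 < c / r := by positivity
  set L : ℝ := Real.log (1 + c / r) with hLdef
  have hL : 0 < L := Real.log_pos (by linarith)
  set sL : ℝ := Real.sqrt L with hsLdef
  have hsL : 0 < sL := Real.sqrt_pos.mpr hL
  have hsq : sL ^ 2 = L := Real.sq_sqrt hL.le
  set t : ℝ := r / sL with htdef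
  have ht1 : 1 < t := (one_lt_div hsL).mpr h
  refine ⟨⌈t⌉₊, ?_, ?_⟩
  · exact Nat.one_le_ceil_iff.mpr (by linarith)
  set m : ℕ := ⌈t⌉₊ with hmdef
  have htm : t ≤ m := Nat.le_ceil t
  have hmt : (m : ℝ) < t + 1 := Nat.ceil_lt_add_one (by linarith)
  have hm2t : (m : ℝ) ≤ 2 * t := by linarith
  have hmpos : (0 : ℝ) < m := by linarith
  have part1 : r ^ 2 / m ≤ r * sL := by
    have : r ^ 2 / m ≤ r ^ 2 / t := by
      apply div_le_div_of_nonneg_left (by positivity) (by linarith) htm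
    calc r ^ 2 / m ≤ r ^ 2 / t := this
      _ = r * sL := by
          rw [htdef]
          field_simp
  have hcm : c / (m:ℝ) ≤ c * sL / r := by
    have h1 : c / (m:ℝ) ≤ c / t := by
      apply div_le_div_of_nonneg_left (by linarith) (by linarith) htm
    have h2 : c / t = c * sL / r := by
      rw [htdef]
      field_simp
    linarith
  have part2 : Real.log (1 + c / m) ≤ (1 + 1 / (2 * Real.exp 1)) * L := by
    have he : (0:ℝ) < Real.exp 1 := Real.exp_pos 1
    have hfac : (1:ℝ) ≤ 1 + 1 / (2 * Real.exp 1) := le_add_of_nonneg_right (by positivity)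
    have hstep : Real.log (1 + c / m) ≤ Real.log (1 + c * sL / r) :=
      Real.log_le_log (by positivity) (by linarith)
    rcases le_or_gt sL 1 with hsL1 | hsL1
    · have : c * sL / r ≤ c / r := by
        gcongr
        nlinarith
      have hle : Real.log (1 + c * sL / r) ≤ L := by
        rw [hLdef]
        apply Real.log_le_log (by positivity) (by linarith)
      nlinarith
    · have hmul : 1 + c * sL / r ≤ sL * (1 + c / r) := by
        have : sL * (1 + c / r) = sL + c * sL / r := by
          field_simp
        linarith
      have hle : Real.log (1 + c * sL / r) ≤ Real.log sL + L := by
        calc Real.log (1 + c * sL / r) ≤ Real.log (sL * (1 + c / r)) :=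
              Real.log_le_log (by positivity) hmul
          _ = Real.log sL + L := by
              rw [Real.log_mul (by linarith) (by positivity)]
      have hlogsL : Real.log sL = Real.log L / 2 := Real.log_sqrt hL.le
      have hlogL : Real.log L ≤ L / Real.exp 1 := by
        have h3 : Real.log (L / Real.exp 1) ≤ L / Real.exp 1 - 1 :=
          Real.log_le_sub_one_of_pos (by positivity)
        rw [Real.log_div (by linarith) (by linarith), Real.log_exp] at h3
        linarith
      have : Real.log (1 + c / ↑m) ≤ Real.log L / 2 + L := by linarith
      have hhalf : Real.log L / 2 ≤ 1 / (2 * Real.exp 1) * L := by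
        have h4 : Real.log L * Real.exp 1 ≤ L := (le_div_iff₀ he).mp hlogL
        rw [one_div, inv_mul_eq_div, le_div_iff₀ (by positivity)]
        nlinarith [h4]
      have hexpand : (1 + 1 / (2 * Real.exp 1)) * L = L + 1 / (2 * Real.exp 1) * L := by ring
      linarith
  have hlognn : 0 ≤ Real.log (1 + c / m) := Real.log_nonneg (le_add_of_nonneg_right (by positivity))
  have part3 : (m : ℝ) * Real.log (1 + c / m) ≤ (2 + 1 / Real.exp 1) * (r * sL) := by
    have he : (0:ℝ) < Real.exp 1 := Real.exp_pos 1
    have h1 : (m : ℝ) * Real.log (1 + c / m) ≤ (2 * t) * ((1 + 1 / (2 * Real.exp 1)) * L) := by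
      apply mul_le_mul hm2t part2 hlognn (by linarith)
    have h2 : (2 * t) * ((1 + 1 / (2 * Real.exp 1)) * L) = (2 + 1 / Real.exp 1) * (r * sL) := by
      rw [htdef, ← hsq]
      field_simp
    linarith
  calc r ^ 2 / m + m * Real.log (1 + c / m)
      ≤ r * sL + (2 + 1 / Real.exp 1) * (r * sL) := add_le_add part1 part3
    _ = (3 + 1 / Real.exp 1) * (r * sL) := by ring

lemma abs_mul_sign' (x : ℝ) : |x| * Real.sign x = x := by
  rcases lt_trichotomy x 0 with hx | hx | hx
  · rw [Real.sign_of_neg hx, abs_of_neg hx]; ring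
  · simp [hx]
  · rw [Real.sign_of_pos hx, abs_of_pos hx]; ring

lemma nsq_le_l1_sq {n M : ℕ} (hn : 1 ≤ n) (F : Fin M → Fin n → ℝ)
    (hF : ∀ j, (1 / n : ℝ) * ∑ i, F j i ^ 2 ≤ 1) (θ : Fin M → ℝ) :
    (1 / n : ℝ) * ∑ i, (∑ j, θ j * F j i) ^ 2 ≤ (∑ j, |θ j|) ^ 2 := by
  have hn0 : (0:ℝ) < n := by positivity
  have hFn : ∀ j, ∑ i, F j i ^ 2 ≤ (n:ℝ) := by
    intro j
    have := hF j
    rw [one_div, inv_mul_le_iff₀ hn0] at this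
    simpa using this
  have hcs : ∀ j j', |∑ i, F j i * F j' i| ≤ (n:ℝ) := by
    intro j j'
    have h2 := Finset.sum_mul_sq_le_sq_mul_sq univ (fun i => F j i) (fun i => F j' i)
    have hnn : (0:ℝ) ≤ ∑ i, F j i ^ 2 := by positivity
    have hnn' : (0:ℝ) ≤ ∑ i, F j' i ^ 2 := by positivity
    have hsq : (∑ i, F j i * F j' i) ^ 2 ≤ (n:ℝ) ^ 2 := by
      calc (∑ i, F j i * F j' i) ^ 2 ≤ (∑ i, F j i ^ 2) * ∑ i, F j' i ^ 2 := h2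
        _ ≤ (n:ℝ) ^ 2 := by nlinarith [hFn j, hFn j']
    exact abs_le.mpr ⟨by nlinarith, by nlinarith⟩
  have hexp : ∑ i, (∑ j, θ j * F j i) ^ 2
      = ∑ j, ∑ j', θ j * θ j' * ∑ i, F j i * F j' i := by
    have hpt : ∀ i : Fin n, (∑ j, θ j * F j i) ^ 2
        = ∑ j, ∑ j', (θ j * F j i) * (θ j' * F j' i) := fun i => by
      rw [sq, Finset.sum_mul_sum]
    rw [Finset.sum_congr rfl fun i _ => hpt i, Finset.sum_comm]
    refine Finset.sum_congr rfl fun j _ => ?_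
    rw [Finset.sum_comm]
    refine Finset.sum_congr rfl fun j' _ => ?_
    rw [Finset.mul_sum]
    exact Finset.sum_congr rfl fun i _ => by ring
  have hterm : ∀ j j', θ j * θ j' * ∑ i, F j i * F j' i ≤ |θ j| * |θ j'| * n := by
    intro j j'
    calc θ j * θ j' * ∑ i, F j i * F j' i ≤ |θ j * θ j' * ∑ i, F j i * F j' i| :=
          le_abs_self _
      _ = |θ j| * |θ j'| * |∑ i, F j i * F j' i| := by rw [abs_mul, abs_mul]
      _ ≤ |θ j| * |θ j'| * n := mul_le_mul_of_nonneg_left (hcs j j') (by positivity)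
  calc (1 / n : ℝ) * ∑ i, (∑ j, θ j * F j i) ^ 2
      = (1 / n : ℝ) * ∑ j, ∑ j', θ j * θ j' * ∑ i, F j i * F j' i := by rw [hexp]
    _ ≤ (1 / n : ℝ) * ∑ j, ∑ j', |θ j| * |θ j'| * n :=
        mul_le_mul_of_nonneg_left
          (Finset.sum_le_sum fun j _ => Finset.sum_le_sum fun j' _ => hterm j j')
          (by positivity)
    _ = (∑ j, |θ j|) ^ 2 := by
        have : ∑ j, ∑ j', |θ j| * |θ j'| * (n:ℝ) = (∑ j, |θ j|) ^ 2 * n := by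
          rw [sq, Finset.sum_mul_sum, Finset.sum_mul]
          exact Finset.sum_congr rfl fun j _ => by rw [Finset.sum_mul]
        rw [this]
        field_simp

set_option maxHeartbeats 1000000 in
/-- Lemma converting an ℓ₀-type sparsity oracle bound into a combined ℓ₀/ℓ₁
bound (Lemma 2 of the paper): with `c̃ = 3 + 1/e`,
`min_θ {‖f_θ - η‖² + ν²(M(θ)/n)log(1+eM/(M(θ)∨1))} ≤ min_θ {‖f_θ - η‖² + c̃ φ̄(θ)}`. -/
theorem stmt_5 (n M : ℕ) (hn : 1 ≤ n) (hM : 1 ≤ M)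
    (F : Fin M → Fin n → ℝ)
    (hF : ∀ j, (1 / n : ℝ) * ∑ i, F j i ^ 2 ≤ 1)
    (η : Fin n → ℝ) (ν : ℝ) (hν : 0 < ν) :
    -- notation
    (fun nsq : (Fin n → ℝ) → ℝ => fun fθ : (Fin M → ℝ) → Fin n → ℝ =>
     fun l1 : (Fin M → ℝ) → ℝ => fun M0 : (Fin M → ℝ) → ℕ =>
     fun ip : (Fin n → ℝ) → (Fin n → ℝ) → ℝ =>
      (⨅ θ : Fin M → ℝ, nsq (fun i => fθ θ i - η i) +
          ν ^ 2 * (M0 θ : ℝ) / n *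
            Real.log (1 + Real.exp 1 * M / (max (M0 θ : ℝ) 1))) ≤
        ⨅ θ : Fin M → ℝ, nsq (fun i => fθ θ i - η i) +
          (3 + 1 / Real.exp 1) *
            (if θ = 0 then 0
             else if ip (fθ θ) η ≤ nsq (fθ θ) then
               min (ν * l1 θ / Real.sqrt n *
                  Real.sqrt (Real.log (1 + Real.exp 1 * M * ν / (l1 θ * Real.sqrt n))))
                 (l1 θ ^ 2)
             else
               ν * l1 θ / Real.sqrt n *
                  Real.sqrt (Real.log (1 + Real.exp 1 * M * ν / (l1 θ * Real.sqrt n))) +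
                 ν ^ 2 * Real.log (1 + Real.exp 1 * M) / ((3 + 1 / Real.exp 1) * n)))
      (fun g => (1 / n : ℝ) * ∑ i, g i ^ 2)
      (fun θ i => ∑ j, θ j * F j i)
      (fun θ => ∑ j, |θ j|)
      (fun θ => (Finset.univ.filter fun j => θ j ≠ 0).card)
      (fun g h => (1 / n : ℝ) * ∑ i, g i * h i) := by
  beta_reduce
  set φ : (Fin M → ℝ) → ℝ := fun θ => (1 / n : ℝ) * ∑ i, ((∑ j, θ j * F j i) - η i) ^ 2 +
      ν ^ 2 * (((Finset.univ.filter fun j => θ j ≠ 0).card : ℕ) : ℝ) / n *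
        Real.log (1 + Real.exp 1 * M /
          (max (((Finset.univ.filter fun j => θ j ≠ 0).card : ℕ) : ℝ) 1)) with hφ
  have hn0 : (0:ℝ) < n := by exact_mod_cast hn.trans_lt' (by norm_num)
  have hM0 : (0:ℝ) < M := by exact_mod_cast hM.trans_lt' (by norm_num)
  have he : (0:ℝ) < Real.exp 1 := Real.exp_pos 1
  have he1 : (1:ℝ) ≤ Real.exp 1 := by nlinarith [Real.add_one_le_exp (1:ℝ)]
  have hM1 : (1:ℝ) ≤ (M:ℝ) := by exact_mod_cast hM
  have hc1 : (1:ℝ) ≤ Real.exp 1 * M := by nlinarith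
  have hφnn : ∀ ψ : Fin M → ℝ, 0 ≤ φ ψ := by
    intro ψ
    rw [hφ]
    apply add_nonneg (by positivity)
    apply mul_nonneg (by positivity)
    apply Real.log_nonneg
    have : 0 ≤ Real.exp 1 * M /
        (max (((Finset.univ.filter fun j => ψ j ≠ 0).card : ℕ) : ℝ) 1) := by positivity
    linarith
  have hBdd : BddBelow (Set.range φ) := ⟨0, by rintro x ⟨ψ, rfl⟩; exact hφnn ψ⟩
  have hLe : ∀ ψ : Fin M → ℝ, iInf φ ≤ φ ψ := fun ψ => ciInf_le hBdd ψ
  refine le_ciInf fun θ => ?_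
  by_cases h0 : θ = 0
  · subst h0
    rw [if_pos rfl, mul_zero, add_zero]
    refine (hLe 0).trans ?_
    have hc : (Finset.univ.filter fun j => (0 : Fin M → ℝ) j ≠ 0) = ∅ := by simp
    rw [hφ]
    simp [hc]
  · rw [if_neg h0]
    set S : ℝ := ∑ j, |θ j| with hSdef
    have hSpos : 0 < S := by
      obtain ⟨j0, hj0⟩ := Function.ne_iff.mp h0
      exact Finset.sum_pos' (fun j _ => abs_nonneg _)
        ⟨j0, Finset.mem_univ _, abs_pos.mpr hj0⟩
    have hsqn : (0:ℝ) < Real.sqrt n := Real.sqrt_pos.mpr hn0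
    have hnn : Real.sqrt n * Real.sqrt n = n := Real.mul_self_sqrt hn0.le
    -- the Maurey step
    have key : ∀ m : ℕ, 1 ≤ m →
        iInf φ ≤ (1/n : ℝ) * ∑ i, ((∑ j, θ j * F j i) - η i)^2
          + (S^2 / m + ν^2 * m / n * Real.log (1 + Real.exp 1 * M / m)) := by
      intro m hm
      have hm0 : (0:ℝ) < m := by exact_mod_cast hm.trans_lt' (by norm_num)
      obtain ⟨J, hJ⟩ := maurey_exists (n := n) (m := m) (M := M) hm hM
        (fun j => |θ j| / S) (fun j => by positivity)
        (by rw [← Finset.sum_div, ← hSdef, div_self hSpos.ne'])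
        (fun j i => S * Real.sign (θ j) * F j i) η (S^2)
        (by
          intro j
          have hsgn : Real.sign (θ j) ^ 2 ≤ 1 := by
            rcases Real.sign_apply_eq (θ j) with h | h | h <;> rw [h] <;> norm_num
          have hcalc : (1/n : ℝ) * ∑ i, (S * Real.sign (θ j) * F j i) ^ 2
              = S^2 * Real.sign (θ j)^2 * ((1/n : ℝ) * ∑ i, F j i ^ 2) := by
            rw [Finset.mul_sum, Finset.mul_sum, Finset.mul_sum]
            exact Finset.sum_congr rfl fun i _ => by ring
          rw [hcalc]
          have hFj := hF j
          have hFnn : (0:ℝ) ≤ (1/n : ℝ) * ∑ i, F j i ^ 2 := by positivity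
          have hstep1 : S^2 * Real.sign (θ j)^2 * ((1/n : ℝ) * ∑ i, F j i ^ 2)
              ≤ S^2 * Real.sign (θ j)^2 * 1 :=
            mul_le_mul_of_nonneg_left hFj
              (mul_nonneg (sq_nonneg S) (sq_nonneg _))
          have hstep2 : S^2 * Real.sign (θ j)^2 ≤ S^2 * 1 :=
            mul_le_mul_of_nonneg_left hsgn (sq_nonneg S)
          nlinarith)
      have hμ : ∀ i, (∑ j, (|θ j| / S) * (S * Real.sign (θ j) * F j i))
          = ∑ j, θ j * F j i := by
        intro i
        refine Finset.sum_congr rfl fun j _ => ?_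
        have h1 : |θ j| / S * (S * Real.sign (θ j) * F j i)
            = (|θ j| * Real.sign (θ j)) * F j i := by
          field_simp
        rw [h1, abs_mul_sign']
      set θ' : Fin M → ℝ :=
        fun j => (∑ k : Fin m, if J k = j then Real.sign (θ j) else 0) * S / m with hθ'
      have hfθ' : ∀ i, (∑ j, θ' j * F j i)
          = (∑ k, S * Real.sign (θ (J k)) * F (J k) i) / m := by
        intro i
        rw [Finset.sum_div]
        have hL1 : ∀ j, θ' j * F j i
            = ∑ k : Fin m, (if J k = j then Real.sign (θ j) * S / m * F j i else 0) := by
          intro j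
          rw [hθ']
          beta_reduce
          rw [Finset.sum_mul, Finset.sum_div, Finset.sum_mul]
          refine Finset.sum_congr rfl fun k _ => ?_
          split <;> simp
        rw [Finset.sum_congr rfl fun j _ => hL1 j, Finset.sum_comm]
        refine Finset.sum_congr rfl fun k _ => ?_
        rw [Finset.sum_ite_eq, if_pos (Finset.mem_univ _)]
        ring
      have hcard : ((Finset.univ.filter fun j => θ' j ≠ 0).card : ℕ) ≤ m := by
        have hsub : (Finset.univ.filter fun j => θ' j ≠ 0) ⊆ Finset.univ.image J := by
          intro j hj
          rw [Finset.mem_filter] at hj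
          by_contra hjim
          apply hj.2
          rw [hθ']
          have : ∀ k : Fin m, (if J k = j then Real.sign (θ j) else 0) = 0 := by
            intro k
            rw [if_neg]
            intro hkj
            exact hjim (Finset.mem_image.mpr ⟨k, Finset.mem_univ _, hkj⟩)
          simp [this]
        calc (Finset.univ.filter fun j => θ' j ≠ 0).card
            ≤ (Finset.univ.image J).card := Finset.card_le_card hsub
          _ ≤ (Finset.univ : Finset (Fin m)).card := Finset.card_image_le
          _ = m := by simp
      have hpen : ν^2 * (((Finset.univ.filter fun j => θ' j ≠ 0).card : ℕ) : ℝ) / n *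
            Real.log (1 + Real.exp 1 * M /
              (max (((Finset.univ.filter fun j => θ' j ≠ 0).card : ℕ) : ℝ) 1))
          ≤ ν^2 * m / n * Real.log (1 + Real.exp 1 * M / m) := by
        set s : ℕ := (Finset.univ.filter fun j => θ' j ≠ 0).card with hs
        rcases Nat.eq_zero_or_pos s with hs0 | hs1
        · rw [hs0]
          have : (0:ℝ) ≤ ν^2 * m / n * Real.log (1 + Real.exp 1 * M / m) := by
            apply mul_nonneg (by positivity)
            apply Real.log_nonneg
            have : (0:ℝ) ≤ Real.exp 1 * M / m := by positivity
            linarith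
          simpa using this
        · have hs1' : (1:ℝ) ≤ (s:ℝ) := by exact_mod_cast hs1
          rw [max_eq_left hs1']
          have hmono := philog_mono (c := Real.exp 1 * M) (x := (s:ℝ)) (y := (m:ℝ))
            (by positivity) (by linarith) (by exact_mod_cast hcard)
          calc ν^2 * (s:ℝ) / n * Real.log (1 + Real.exp 1 * M / s)
              = ν^2 / n * ((s:ℝ) * Real.log (1 + Real.exp 1 * M / s)) := by ring
            _ ≤ ν^2 / n * ((m:ℝ) * Real.log (1 + Real.exp 1 * M / m)) :=
                mul_le_mul_of_nonneg_left hmono (by positivity)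
            _ = ν^2 * m / n * Real.log (1 + Real.exp 1 * M / m) := by ring
      refine (hLe θ').trans ?_
      rw [hφ]
      beta_reduce
      have hnsq : (1/n : ℝ) * ∑ i, ((∑ j, θ' j * F j i) - η i)^2
          ≤ (1/n : ℝ) * ∑ i, ((∑ j, θ j * F j i) - η i)^2 + S^2 / m := by
        have h2 : (1/n : ℝ) * ∑ i, ((∑ j, θ' j * F j i) - η i)^2
            = (1/n : ℝ) * ∑ i, ((∑ k, S * Real.sign (θ (J k)) * F (J k) i) / m - η i)^2 := by
          congr 1
          exact Finset.sum_congr rfl fun i _ => by rw [hfθ' i]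
        rw [h2]
        calc (1/n : ℝ) * ∑ i, ((∑ k, S * Real.sign (θ (J k)) * F (J k) i) / m - η i)^2
            ≤ (1/n : ℝ) * ∑ i, ((∑ j, (|θ j| / S) * (S * Real.sign (θ j) * F j i)) - η i)^2
              + S^2 / m := hJ
          _ = (1/n : ℝ) * ∑ i, ((∑ j, θ j * F j i) - η i)^2 + S^2 / m := by
              congr 2
              exact Finset.sum_congr rfl fun i _ => by rw [hμ i]
      linarith
    -- numeric setup
    set r : ℝ := S * Real.sqrt n / ν with hrdef
    have hrpos : 0 < r := by positivity
    have harg : Real.exp 1 * M / r = Real.exp 1 * M * ν / (S * Real.sqrt n) := by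
      rw [hrdef]
      field_simp
    set L : ℝ := Real.log (1 + Real.exp 1 * M * ν / (S * Real.sqrt n)) with hLdef
    have hLr : Real.log (1 + Real.exp 1 * M / r) = L := by rw [harg, hLdef]
    have hLpos : 0 < L := by
      rw [hLdef]
      apply Real.log_pos
      have : (0:ℝ) < Real.exp 1 * M * ν / (S * Real.sqrt n) := by positivity
      linarith
    have hsLnn : 0 ≤ Real.sqrt L := Real.sqrt_nonneg L
    set A : ℝ := ν * S / Real.sqrt n * Real.sqrt L with hAdef
    have hApos : 0 < A := by
      rw [hAdef]
      have : 0 < Real.sqrt L := Real.sqrt_pos.mpr hLpos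
      positivity
    have hnn2 : Real.sqrt n ^ 2 = (n:ℝ) := Real.sq_sqrt hn0.le
    have hconv : ν^2 / n * (r * Real.sqrt L) = A := by
      rw [hAdef, hrdef]
      field_simp
      linear_combination hnn2
    have hS2conv : ν^2 / n * r^2 = S^2 := by
      rw [hrdef]
      field_simp
      linear_combination hnn2
    have hctpos : (0:ℝ) < 3 + 1 / Real.exp 1 := by positivity
    -- bound via core when sqrt L < r
    have hcore : Real.sqrt L < r →
        iInf φ ≤ (1/n : ℝ) * ∑ i, ((∑ j, θ j * F j i) - η i)^2
          + (3 + 1 / Real.exp 1) * A := by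
      intro hcase
      obtain ⟨m, hm1, hmb⟩ := core_bound hc1 hrpos (by rw [hLr]; exact hcase)
      rw [hLr] at hmb
      have hkey := key m hm1
      have hb2 : S^2 / m + ν^2 * m / n * Real.log (1 + Real.exp 1 * M / m)
          ≤ (3 + 1 / Real.exp 1) * A := by
        have hmul := mul_le_mul_of_nonneg_left hmb (show (0:ℝ) ≤ ν^2 / n by positivity)
        have hL1 : ν^2 / n * (r ^ 2 / m + m * Real.log (1 + Real.exp 1 * M / m))
            = S^2 / m + ν^2 * m / n * Real.log (1 + Real.exp 1 * M / m) := by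
          rw [← hS2conv]
          ring
        have hR1 : ν^2 / n * ((3 + 1 / Real.exp 1) * (r * Real.sqrt L))
            = (3 + 1 / Real.exp 1) * A := by
          rw [← hconv]
          ring
        rw [hL1, hR1] at hmul
        exact hmul
      linarith
    have hAS : Real.sqrt L < r → A ≤ S^2 := by
      intro hcase
      rw [← hconv, ← hS2conv]
      apply mul_le_mul_of_nonneg_left _ (by positivity)
      nlinarith [hrpos.le, hsLnn]
    have hSA : r ≤ Real.sqrt L → S^2 ≤ A := by
      intro hcase
      rw [← hconv, ← hS2conv]
      apply mul_le_mul_of_nonneg_left _ (by positivity)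
      nlinarith [hrpos.le, hsLnn]
    by_cases hip : (1/n : ℝ) * ∑ i, (∑ j, θ j * F j i) * η i
        ≤ (1/n : ℝ) * ∑ i, (∑ j, θ j * F j i)^2
    · rw [if_pos hip]
      rcases lt_or_ge (Real.sqrt L) r with hcase | hcase
      · rw [min_eq_left (hAS hcase)]
        exact hcore hcase
      · rw [min_eq_right (hSA hcase)]
        have hexp : (1/n : ℝ) * ∑ i, ((∑ j, θ j * F j i) - η i)^2
            = (1/n : ℝ) * ∑ i, (∑ j, θ j * F j i)^2
              - 2 * ((1/n : ℝ) * ∑ i, (∑ j, θ j * F j i) * η i)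
              + (1/n : ℝ) * ∑ i, (η i)^2 := by
          have hpt : ∀ i : Fin n, ((∑ j, θ j * F j i) - η i)^2
              = ((∑ j, θ j * F j i)^2 - 2 * ((∑ j, θ j * F j i) * η i)) + (η i)^2 :=
            fun i => by ring
          rw [Finset.sum_congr rfl fun i _ => hpt i, Finset.sum_add_distrib,
            Finset.sum_sub_distrib, ← Finset.mul_sum]
          ring
        have hCS := nsq_le_l1_sq hn F hF θ
        rw [← hSdef] at hCS
        have hfin : (1/n : ℝ) * ∑ i, (η i)^2
            ≤ (1/n : ℝ) * ∑ i, ((∑ j, θ j * F j i) - η i)^2 + (3 + 1/Real.exp 1) * S^2 := by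
          have hepos : (0:ℝ) < 1 / Real.exp 1 := by positivity
          linarith [hexp, hip, hCS, mul_nonneg hepos.le (sq_nonneg S), sq_nonneg S]
        refine (hLe 0).trans ?_
        have hc : (Finset.univ.filter fun j => (0 : Fin M → ℝ) j ≠ 0) = ∅ := by simp
        have hφ0 : φ 0 = (1/n : ℝ) * ∑ i, (η i)^2 := by
          rw [hφ]
          simp [hc]
        rw [hφ0]
        exact hfin
    · rw [if_neg hip]
      rcases lt_or_ge (Real.sqrt L) r with hcase | hcase
      · refine (hcore hcase).trans ?_
        have hlognn : 0 ≤ Real.log (1 + Real.exp 1 * M) := by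
          apply Real.log_nonneg
          nlinarith
        have hexpand : (3 + 1/Real.exp 1) * (A + ν^2 * Real.log (1 + Real.exp 1 * M)
              / ((3 + 1/Real.exp 1) * n))
            = (3 + 1/Real.exp 1) * A + ν^2 * Real.log (1 + Real.exp 1 * M) / n := by
          field_simp
        rw [hexpand]
        have : 0 ≤ ν^2 * Real.log (1 + Real.exp 1 * M) / n := by positivity
        linarith
      · have hkey := key 1 le_rfl
        have hs2a := hSA hcase
        have hexpand : (3 + 1/Real.exp 1) * (A + ν^2 * Real.log (1 + Real.exp 1 * M)
              / ((3 + 1/Real.exp 1) * n))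
            = (3 + 1/Real.exp 1) * A + ν^2 * Real.log (1 + Real.exp 1 * M) / n := by
          field_simp
        rw [hexpand]
        simp only [Nat.cast_one, div_one, mul_one] at hkey
        have hAc : A ≤ (3 + 1/Real.exp 1) * A := by
          nlinarith [hApos.le, mul_nonneg (by positivity : (0:ℝ) ≤ 1/Real.exp 1) hApos.le]
        refine hkey.trans ?_
        refine add_le_add_right ?_ _
        have hcc : ν^2/(n:ℝ) * Real.log (1 + Real.exp 1 * (M:ℝ))
            = ν^2 * Real.log (1 + Real.exp 1 * (M:ℝ)) / (n:ℝ) := by ring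
        rw [hcc]
        exact add_le_add_left (hs2a.trans hAc) _
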